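/- Let R be a commutative unital complex semisimple Banach algebra and A ∈ R^{n×n}. Then A is exponentially stable (there exist C > 0 and ε > 0 with ‖e^{tA}‖ ≤ C e^{−εt} for all t ≥ 0) if and only if sup{Re λ : λ is an eigenvalue of Â(φ) for some character φ of R} < 0. -/

import Mathlib

open WeakDual NormedSpace

attribute [local instance] Matrix.linftyOpNormedRing Matrix.linftyOpNormedAlgebra

namespace ExpStabAux

/-- If `v` is an eigenvector of `M` with eigenvalue `lam`, then it is an eigenvector of
`exp M` with eigenvalue `Complex.exp lam`. -/
lemma exp_mulVec {n : ℕ} (M : Matrix (Fin n) (Fin n) ℂ) {lam : ℂ} {v : Fin n → ℂ}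
    (hv : M.mulVec v = lam • v) :
    (exp M).mulVec v = Complex.exp lam • v := by
  have hpow : ∀ k : ℕ, (M ^ k).mulVec v = (lam ^ k) • v := by
    intro k
    induction k with
    | zero => simp [Matrix.one_mulVec]
    | succ k ih =>
      rw [pow_succ', ← Matrix.mulVec_mulVec, ih, Matrix.mulVec_smul, hv, pow_succ']
      rw [smul_smul, mul_comm]
  let L : Matrix (Fin n) (Fin n) ℂ →L[ℂ] (Fin n → ℂ) :=
    { toLinearMap :=
        { toFun := fun X => X.mulVec v
          map_add' := fun X Y => Matrix.add_mulVec X Y v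
          map_smul' := fun c X => by simp [Matrix.smul_mulVec] }
      cont := by
        exact Continuous.matrix_mulVec continuous_id continuous_const }
  have hLe : ∀ X : Matrix (Fin n) (Fin n) ℂ, L X = X.mulVec v := fun _ => rfl
  have h1 : (exp M).mulVec v = ∑' k : ℕ, ((k.factorial : ℂ)⁻¹ * lam ^ k) • v := by
    rw [← hLe, exp_eq_tsum (𝕂 := ℂ), L.map_tsum (expSeries_summable' (𝕂 := ℂ) M)]
    congr 1
    ext k
    rw [L.map_smul, hLe, hpow k, smul_smul]
  rw [h1, Summable.tsum_smul_const (by simpa [smul_eq_mul] using expSeries_summable' (𝕂 := ℂ) lam)]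
  congr 1
  rw [Complex.exp_eq_exp_ℂ, exp_eq_tsum (𝕂 := ℂ)]
  simp [smul_eq_mul]

/-- Spectral mapping (inclusion) for the exponential of a complex matrix. -/
lemma spectrum_exp_subset {n : ℕ} (M : Matrix (Fin n) (Fin n) ℂ) :
    spectrum ℂ (exp M) ⊆ Complex.exp '' spectrum ℂ M := by
  intro μ hμ
  set f : Module.End ℂ (Fin n → ℂ) := Matrix.toLin' M with hf
  set g : Module.End ℂ (Fin n → ℂ) := Matrix.toLin' (exp M) with hg
  have hμ' : μ ∈ spectrum ℂ g := by
    have : g = Matrix.toLinAlgEquiv' (exp M) := rfl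
    rw [this, AlgEquiv.spectrum_eq]
    exact hμ
  have hEig : g.HasEigenvalue μ := Module.End.hasEigenvalue_iff_mem_spectrum.mpr hμ'
  set E := g.eigenspace μ with hE
  have hEnt : Nontrivial E := Submodule.nontrivial_iff_ne_bot.mpr hEig
  have hcomm : Commute M (exp M) := (Commute.refl M).exp_right
  have hfg : Commute f g := by
    have h1 : (Matrix.toLinAlgEquiv' (R := ℂ) (n := Fin n)) M = f := rfl
    rw [← h1]
    have h2 : (Matrix.toLinAlgEquiv' (R := ℂ) (n := Fin n)) (exp M) = g := rfl
    rw [← h2]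
    exact hcomm.map _
  have hinv : ∀ x ∈ E, f x ∈ E := by
    intro x hx
    rw [hE, Module.End.mem_eigenspace_iff] at hx ⊢
    calc g (f x) = (g * f) x := rfl
    _ = (f * g) x := by rw [← hfg]
    _ = f (g x) := rfl
    _ = μ • f x := by rw [hx, map_smul]
  obtain ⟨lam, hlam⟩ := Module.End.exists_eigenvalue (f.restrict hinv)
  obtain ⟨w, hw⟩ := hlam.exists_hasEigenvector
  have hw1 : f.restrict hinv w = lam • w := hw.apply_eq_smul
  have hwval : f (w : Fin n → ℂ) = lam • (w : Fin n → ℂ) := by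
    have h2 := congrArg (Subtype.val) hw1
    rwa [LinearMap.restrict_coe_apply] at h2
  have hwne : (w : Fin n → ℂ) ≠ 0 := fun h => hw.right (Subtype.coe_injective (by simpa using h))
  have hMw : M.mulVec w = lam • (w : Fin n → ℂ) := by
    rw [← Matrix.toLin'_apply]; exact hwval
  have hgw : (exp M).mulVec w = μ • (w : Fin n → ℂ) := by
    have h4 : g (w : Fin n → ℂ) = μ • (w : Fin n → ℂ) := Module.End.mem_eigenspace_iff.mp w.2
    rw [← Matrix.toLin'_apply]; exact h4
  have hexpw := exp_mulVec M hMw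
  have hμlam : μ = Complex.exp lam := by
    have h3 : (μ - Complex.exp lam) • (w : Fin n → ℂ) = 0 := by
      rw [sub_smul, ← hgw, ← hexpw, sub_self]
    rcases smul_eq_zero.mp h3 with h | h
    · exact sub_eq_zero.mp h
    · exact absurd h hwne
  refine ⟨lam, ?_, hμlam.symm⟩
  have h5 : lam ∈ spectrum ℂ f := by
    rw [← Module.End.hasEigenvalue_iff_mem_spectrum]
    exact Module.End.hasEigenvalue_of_hasEigenvector ⟨Module.End.mem_eigenspace_iff.mpr hwval, hwne⟩
  have heq : (Matrix.toLinAlgEquiv' (R := ℂ) (n := Fin n)) M = f := rfl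
  rwa [← heq, AlgEquiv.spectrum_eq] at h5

variable {R : Type*} [NormedCommRing R] [NormedAlgebra ℂ R] [CompleteSpace R]

noncomputable instance instNormedAlgebraRatMatrixAux {n : ℕ} :
    NormedAlgebra ℚ (Matrix (Fin n) (Fin n) R) :=
  NormedAlgebra.restrictScalars ℚ ℂ (Matrix (Fin n) (Fin n) R)

instance instCompleteSpaceMatrixAux {n : ℕ} : @CompleteSpace (Matrix (Fin n) (Fin n) R)
    (@PseudoMetricSpace.toUniformSpace _ (@SeminormedRing.toPseudoMetricSpace _
      (@NormedRing.toSeminormedRing _ Matrix.linftyOpNormedRing))) :=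
  inferInstanceAs (CompleteSpace (Fin n → Fin n → R))

lemma nnnorm_map_le {n : ℕ} (φ : characterSpace ℂ R) (X : Matrix (Fin n) (Fin n) R) :
    ‖X.map (φ : R → ℂ)‖₊ ≤ ‖X‖₊ * ‖(1 : R)‖₊ := by
  have hφ : ∀ x : R, ‖φ x‖₊ ≤ ‖x‖₊ * ‖(1 : R)‖₊ := fun x =>
    spectrum.norm_le_norm_mul_of_mem (WeakDual.CharacterSpace.apply_mem_spectrum φ x)
  rw [Matrix.linfty_opNNNorm_def, Matrix.linfty_opNNNorm_def]
  refine Finset.sup_le fun i _ => ?_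
  calc ∑ j, ‖(X.map (φ : R → ℂ)) i j‖₊ ≤ ∑ j, ‖X i j‖₊ * ‖(1 : R)‖₊ :=
        Finset.sum_le_sum fun j _ => hφ _
  _ = (∑ j, ‖X i j‖₊) * ‖(1 : R)‖₊ := by rw [← Finset.sum_mul]
  _ ≤ (Finset.univ.sup fun i => ∑ j, ‖X i j‖₊) * ‖(1 : R)‖₊ :=
        mul_le_mul_left (Finset.le_sup (f := fun i => ∑ j, ‖X i j‖₊) (Finset.mem_univ i)) _

/-- Applying a character entrywise commutes with the matrix exponential. -/
lemma map_exp_char {n : ℕ} (φ : characterSpace ℂ R) (X : Matrix (Fin n) (Fin n) R) :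
    (exp X).map (φ : R → ℂ) = exp (X.map (φ : R → ℂ)) := by
  set Φ : Matrix (Fin n) (Fin n) R →ₐ[ℂ] Matrix (Fin n) (Fin n) ℂ :=
    (WeakDual.CharacterSpace.equivAlgHom φ).mapMatrix with hΦdef
  have hΦapp : ∀ Y : Matrix (Fin n) (Fin n) R, Φ Y = Y.map (φ : R → ℂ) := by
    intro Y
    rw [hΦdef, AlgHom.mapMatrix_apply, WeakDual.CharacterSpace.equivAlgHom_coe]
  have hΦ : Continuous Φ := by
    refine AddMonoidHomClass.continuous_of_bound Φ ‖(1 : R)‖ fun Y => ?_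
    rw [hΦapp, mul_comm]
    exact_mod_cast nnnorm_map_le φ Y
  rw [← hΦapp, ← hΦapp]; exact map_exp Φ hΦ X

/-- The spectrum of a matrix over a commutative complex Banach algebra is the union of the
spectra of the matrices obtained by applying characters entrywise. -/
lemma mem_spectrum_iff_char {n : ℕ} (A : Matrix (Fin n) (Fin n) R) (z : ℂ) :
    z ∈ spectrum ℂ A ↔
      ∃ φ : characterSpace ℂ R, z ∈ spectrum ℂ (A.map (φ : R → ℂ)) := by
  constructor
  · intro hz
    rw [spectrum.mem_iff] at hz
    have hdet : ¬ IsUnit ((algebraMap ℂ (Matrix (Fin n) (Fin n) R) z - A).det) := by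
      rwa [← Matrix.isUnit_iff_isUnit_det]
    obtain ⟨φ, hφ⟩ := WeakDual.CharacterSpace.exists_apply_eq_zero hdet
    refine ⟨φ, ?_⟩
    rw [spectrum.mem_iff, Matrix.isUnit_iff_isUnit_det]
    set Ψ : R →+* ℂ := (WeakDual.CharacterSpace.equivAlgHom φ : R →ₐ[ℂ] ℂ).toRingHom with hΨdef
    have hΨ : ∀ x : R, Ψ x = φ x := fun x => by
      show (WeakDual.CharacterSpace.equivAlgHom φ) x = φ x
      rw [WeakDual.CharacterSpace.equivAlgHom_coe]
    have hmap : algebraMap ℂ (Matrix (Fin n) (Fin n) ℂ) z - A.map (φ : R → ℂ) =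
        ((WeakDual.CharacterSpace.equivAlgHom φ).mapMatrix
          (algebraMap ℂ (Matrix (Fin n) (Fin n) R) z - A)) := by
      rw [map_sub, AlgHom.commutes, AlgHom.mapMatrix_apply,
        WeakDual.CharacterSpace.equivAlgHom_coe]
    rw [hmap]
    have hdet0 : ((WeakDual.CharacterSpace.equivAlgHom φ).mapMatrix
        (algebraMap ℂ (Matrix (Fin n) (Fin n) R) z - A)).det = 0 := by
      have h3 := (RingHom.map_det Ψ (algebraMap ℂ (Matrix (Fin n) (Fin n) R) z - A)).symm
      have h2 : (Ψ.mapMatrix (algebraMap ℂ (Matrix (Fin n) (Fin n) R) z - A)) =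
          ((WeakDual.CharacterSpace.equivAlgHom φ).mapMatrix
            (algebraMap ℂ (Matrix (Fin n) (Fin n) R) z - A)) := rfl
      rw [h2] at h3
      rw [h3, hΨ, hφ]
    rw [hdet0]
    simp
  · rintro ⟨φ, hz⟩
    have h2 : (WeakDual.CharacterSpace.equivAlgHom φ).mapMatrix A = A.map (φ : R → ℂ) := by
      rw [AlgHom.mapMatrix_apply, WeakDual.CharacterSpace.equivAlgHom_coe]
    have h3 := AlgHom.spectrum_apply_subset (WeakDual.CharacterSpace.equivAlgHom φ).mapMatrix A
    rw [h2] at h3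
    exact h3 hz

lemma pow_mem_spectrum_pow {A : Type*} [Ring A] [Algebra ℂ A] {a : A} {z : ℂ}
    (hz : z ∈ spectrum ℂ a) (m : ℕ) : z ^ m ∈ spectrum ℂ (a ^ m) := by
  have h := spectrum.subset_polynomial_aeval a ((Polynomial.X : Polynomial ℂ) ^ m)
  have hmem : z ^ m ∈
      (fun x => Polynomial.eval x ((Polynomial.X : Polynomial ℂ) ^ m)) '' spectrum ℂ a :=
    ⟨z, hz, by simp⟩
  simpa using h hmem

/-- From a strict bound on the spectral radius, a geometric bound on the norms of powers. -/
lemma norm_pow_le_of_spectralRadius_lt {n : ℕ} (B : Matrix (Fin n) (Fin n) R)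
    {ρ : ℝ} (hρ : 0 < ρ) (hr : spectralRadius ℂ B < (ρ.toNNReal : ENNReal)) :
    ∃ K : ℕ, ∀ k ≥ K, ‖B ^ k‖ ≤ ρ ^ k := by
  have htend := spectrum.pow_nnnorm_pow_one_div_tendsto_nhds_spectralRadius B
  obtain ⟨K, hK⟩ := Filter.eventually_atTop.mp (htend.eventually_lt_const hr)
  refine ⟨K + 1, fun k hk => ?_⟩
  have hk1 : 1 ≤ k := le_trans (Nat.le_add_left 1 K) hk
  have h1 := hK k (le_trans (Nat.le_succ K) hk)
  have hkR : (0:ℝ) < (k:ℝ) := by positivity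
  have h2 : (‖B ^ k‖₊ : ENNReal) < ((ρ.toNNReal : ENNReal)) ^ (k:ℝ) := by
    calc (‖B ^ k‖₊ : ENNReal) = ((‖B ^ k‖₊ : ENNReal) ^ (1/(k:ℝ))) ^ (k:ℝ) := by
          rw [← ENNReal.rpow_mul, one_div, inv_mul_cancel₀ hkR.ne', ENNReal.rpow_one]
    _ < ((ρ.toNNReal : ENNReal)) ^ (k:ℝ) := ENNReal.rpow_lt_rpow h1 hkR
  rw [ENNReal.rpow_natCast, ← ENNReal.coe_pow, ENNReal.coe_lt_coe] at h2
  have h3 : ‖B ^ k‖ ≤ ((ρ.toNNReal ^ k : NNReal) : ℝ) := by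
    exact_mod_cast h2.le
  rwa [NNReal.coe_pow, Real.coe_toNNReal ρ hρ.le] at h3

end ExpStabAux

open ExpStabAux

set_option maxHeartbeats 1000000 in
set_option synthInstance.maxHeartbeats 200000 in
/-- For a commutative unital complex semisimple Banach algebra `R` and
`A ∈ R^{n×n}`, `A` is exponentially stable iff the real parts of the eigenvalues of all
the matrices `Â(φ)`, `φ` a character of `R`, are bounded above by a negative constant. -/
theorem exponentially_stable_iff_spectrum_re_neg
    {R : Type*} [NormedCommRing R] [NormedAlgebra ℂ R] [CompleteSpace R] [Nontrivial R]
    (hss : ∀ x : R, (∀ φ : characterSpace ℂ R, φ x = 0) → x = 0)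
    {n : ℕ} (A : Matrix (Fin n) (Fin n) R) :
    (∃ C > (0 : ℝ), ∃ ε > (0 : ℝ), ∀ t : ℝ, 0 ≤ t →
        ‖exp ((t : ℂ) • A)‖ ≤ C * Real.exp (-ε * t)) ↔
      (∃ σ < (0 : ℝ), ∀ φ : characterSpace ℂ R,
        ∀ lam ∈ spectrum ℂ (A.map fun x => φ x), lam.re ≤ σ) := by
  constructor
  · rintro ⟨C, hC, ε, hε, hbound⟩
    refine ⟨-ε, by linarith, fun φ lam hlam => ?_⟩
    have hlamA : lam ∈ spectrum ℂ A := (mem_spectrum_iff_char A lam).mpr ⟨φ, hlam⟩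
    by_contra hgt
    push_neg at hgt
    set δ := lam.re + ε with hδdef
    have hδpos : 0 < δ := by simp only [hδdef]; linarith
    set D := C * ‖(1 : Matrix (Fin n) (Fin n) R)‖ with hDdef
    have key : ∀ m : ℕ, Real.exp ((m : ℝ) * δ) ≤ D := by
      intro m
      have h1 : Complex.exp lam ^ m ∈ spectrum ℂ ((exp A) ^ m) :=
        pow_mem_spectrum_pow (by rw [Complex.exp_eq_exp_ℂ]; exact spectrum.exp_mem_exp A hlamA) m
      have h2 : (exp A) ^ m = exp (((m : ℝ) : ℂ) • A) := by
        have hc : (((m : ℝ) : ℂ)) • A = (m : ℕ) • A := by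
          rw [← Nat.cast_smul_eq_nsmul ℂ m A]
          norm_num
        rw [hc, show exp (m • A) = exp A ^ m from exp_nsmul m A]
      have h3 : ‖Complex.exp lam ^ m‖ ≤ ‖(exp A) ^ m‖ * ‖(1 : Matrix (Fin n) (Fin n) R)‖ :=
        spectrum.norm_le_norm_mul_of_mem h1
      have h4 : ‖(exp A) ^ m‖ ≤ C * Real.exp (-ε * m) := by
        rw [h2]; exact hbound (m : ℝ) (by positivity)
      have h5 : ‖Complex.exp lam ^ m‖ = Real.exp lam.re ^ m := by
        rw [norm_pow, Complex.norm_exp]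
      have h6 : Real.exp lam.re ^ m ≤ C * Real.exp (-ε * m) * ‖(1 : Matrix (Fin n) (Fin n) R)‖ := by
        rw [← h5]
        exact le_trans h3 (mul_le_mul_of_nonneg_right h4 (norm_nonneg _))
      have h7 : Real.exp ((m : ℝ) * δ) =
          Real.exp lam.re ^ m * Real.exp (ε * m) := by
        rw [← Real.exp_nat_mul, ← Real.exp_add, hδdef]; ring_nf
      rw [h7]
      calc Real.exp lam.re ^ m * Real.exp (ε * m)
          ≤ (C * Real.exp (-ε * m) * ‖(1 : Matrix (Fin n) (Fin n) R)‖) * Real.exp (ε * m) :=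
            mul_le_mul_of_nonneg_right h6 (Real.exp_pos _).le
      _ = D * (Real.exp (-ε * m) * Real.exp (ε * m)) := by rw [hDdef]; ring
      _ = D := by rw [← Real.exp_add]; ring_nf; simp
    set m := ⌈(D + 1) / δ⌉₊ with hmdef
    have hm1 : (D + 1) / δ ≤ (m : ℝ) := Nat.le_ceil _
    have hm2 : D + 1 ≤ (m : ℝ) * δ := by
      rw [div_le_iff₀ hδpos] at hm1; linarith
    have hm3 : (m : ℝ) * δ + 1 ≤ Real.exp ((m : ℝ) * δ) := Real.add_one_le_exp _
    have := key m
    linarith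
  · rintro ⟨σ, hσ, hσbound⟩
    have hspec : ∀ μ ∈ spectrum ℂ (exp A), ‖μ‖₊ ≤ Real.toNNReal (Real.exp σ) := by
      intro μ hμ
      obtain ⟨φ, hμφ⟩ := (mem_spectrum_iff_char (exp A) μ).mp hμ
      rw [map_exp_char] at hμφ
      obtain ⟨lam, hlam, rfl⟩ := spectrum_exp_subset _ hμφ
      have hre : lam.re ≤ σ := hσbound φ lam hlam
      have hle : ‖Complex.exp lam‖ ≤ Real.exp σ := by
        rw [Complex.norm_exp]
        exact Real.exp_le_exp.mpr hre
      rw [← norm_toNNReal]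
      exact Real.toNNReal_le_toNNReal hle
    have hrad : spectralRadius ℂ (exp A) < ((Real.exp (σ/2)).toNNReal : ENNReal) := by
      have h1 : spectralRadius ℂ (exp A) ≤ (((Real.exp σ).toNNReal : NNReal) : ENNReal) :=
        iSup₂_le fun k hk => ENNReal.coe_le_coe.mpr (hspec k hk)
      refine lt_of_le_of_lt h1 (ENNReal.coe_lt_coe.mpr ?_)
      rw [Real.toNNReal_lt_toNNReal_iff (Real.exp_pos _)]
      exact Real.exp_lt_exp.mpr (by linarith)
    obtain ⟨K, hK⟩ := norm_pow_le_of_spectralRadius_lt (exp A) (Real.exp_pos (σ/2)) hrad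
    have hcont : Continuous (fun s : ℝ => exp ((s : ℂ) • A)) :=
      exp_continuous.comp ((Complex.continuous_ofReal).smul continuous_const)
    obtain ⟨M, hM⟩ := (isCompact_Icc (a := (0:ℝ)) (b := (K : ℝ) + 1)).exists_bound_of_continuousOn
      hcont.continuousOn
    have hM0 : 0 ≤ M := le_trans (norm_nonneg _) (hM 0 ⟨le_refl _, by positivity⟩)
    refine ⟨(M + 1) * Real.exp (-(σ/2) * ((K : ℝ) + 1)), by positivity, -(σ/2), by linarith,
      fun t ht => ?_⟩
    rw [neg_neg]
    by_cases hcase : t ≤ (K : ℝ) + 1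
    · have h1 : (1:ℝ) ≤ Real.exp (-(σ/2) * ((K : ℝ) + 1) + σ/2 * t) :=
        Real.one_le_exp (by nlinarith)
      calc ‖exp ((t : ℂ) • A)‖ ≤ M := hM t ⟨ht, hcase⟩
      _ ≤ (M + 1) * Real.exp (-(σ/2) * ((K : ℝ) + 1) + σ/2 * t) := by nlinarith
      _ = (M + 1) * Real.exp (-(σ/2) * ((K : ℝ) + 1)) * Real.exp (σ/2 * t) := by
          rw [mul_assoc, ← Real.exp_add]
    · push_neg at hcase
      set k := ⌊t⌋₊ with hkdef
      have hkK : K + 1 ≤ k := Nat.le_floor (by push_cast; linarith)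
      have hkt : (k : ℝ) ≤ t := Nat.floor_le ht
      have hts : t - 1 < (k : ℝ) := Nat.sub_one_lt_floor t
      set s : ℝ := t - (k : ℝ) with hsdef
      have hsplit : exp ((t : ℂ) • A) =
          exp (((k : ℝ) : ℂ) • A) * exp ((s : ℂ) • A) := by
        rw [← show exp (((k : ℝ) : ℂ) • A + (s : ℂ) • A) = exp (((k : ℝ) : ℂ) • A) * exp ((s : ℂ) • A) from
          exp_add_of_commute (((Commute.refl A).smul_left _).smul_right _), ← add_smul]
        congr 1
        rw [hsdef]
        push_cast
        ring
      have h5 : ‖exp (((k : ℝ) : ℂ) • A)‖ ≤ (Real.exp (σ/2)) ^ k := by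
        have hc : (((k : ℝ) : ℂ)) • A = (k : ℕ) • A := by
          rw [← Nat.cast_smul_eq_nsmul ℂ k A]; norm_num
        rw [hc, show exp (k • A) = exp A ^ k from exp_nsmul k A]
        exact hK k (le_trans (Nat.le_succ K) hkK)
      have h6 : ‖exp ((s : ℂ) • A)‖ ≤ M := by
        have hK1 : (1 : ℝ) ≤ (K : ℝ) + 1 := by
          have := Nat.cast_nonneg (α := ℝ) K
          linarith
        refine hM s ⟨by rw [hsdef]; linarith, by rw [hsdef]; linarith⟩
      have e1 : (Real.exp (σ/2)) ^ k = Real.exp ((k : ℝ) * (σ/2)) := (Real.exp_nat_mul _ k).symm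
      have e2 : Real.exp ((k : ℝ) * (σ/2)) ≤ Real.exp ((t - 1) * (σ/2)) :=
        Real.exp_le_exp.mpr (by nlinarith)
      calc ‖exp ((t : ℂ) • A)‖
          ≤ ‖exp (((k : ℝ) : ℂ) • A)‖ * ‖exp ((s : ℂ) • A)‖ := by
            rw [hsplit]; exact norm_mul_le _ _
      _ ≤ (Real.exp (σ/2)) ^ k * M := mul_le_mul h5 h6 (norm_nonneg _) (by positivity)
      _ ≤ Real.exp ((t - 1) * (σ/2)) * M := by
            rw [e1]; exact mul_le_mul_of_nonneg_right e2 hM0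
      _ ≤ (M + 1) * Real.exp (-(σ/2) * ((K : ℝ) + 1)) * Real.exp (σ/2 * t) := by
            rw [show (t - 1) * (σ/2) = σ/2 * t + (-(σ/2)) by ring, Real.exp_add]
            have h8 : Real.exp (-(σ/2)) ≤ Real.exp (-(σ/2) * ((K : ℝ) + 1)) :=
              Real.exp_le_exp.mpr (by nlinarith)
            have h11 : Real.exp (-(σ/2)) * M ≤ Real.exp (-(σ/2) * ((K : ℝ) + 1)) * (M + 1) :=
              mul_le_mul h8 (by linarith) hM0 (Real.exp_pos _).le
            calc Real.exp (σ/2 * t) * Real.exp (-(σ/2)) * M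
                = Real.exp (σ/2 * t) * (Real.exp (-(σ/2)) * M) := by ring
            _ ≤ Real.exp (σ/2 * t) * (Real.exp (-(σ/2) * ((K : ℝ) + 1)) * (M + 1)) :=
                mul_le_mul_of_nonneg_left h11 (Real.exp_pos _).le
            _ = (M + 1) * Real.exp (-(σ/2) * ((K : ℝ) + 1)) * Real.exp (σ/2 * t) := by ring
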